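/- Let m = 2^l·e > 2 with l ≥ 1 and e odd, e ≥ 3, and n = 2^m − 1. The binary cyclic code C_{S,0} := C(T_{(0,m)}) has length n, dimension 2^{m−1}, and its minimum distance d satisfies d ≥ 2^{(m−2^l+2)/2} + 2; in particular, if l = 1 then d ≥ 2^{m/2} + 2. -/

import Mathlib

open Polynomial

noncomputable def wt2 (a : ℕ) : ℕ := (Nat.digits 2 a).sum

noncomputable def ell (m i : ℕ) : ℕ :=
  sInf {l : ℕ | 0 < l ∧ i * 2 ^ l % (2 ^ m - 1) = i % (2 ^ m - 1)}

noncomputable def coset (m i : ℕ) : Finset ℕ :=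
  (Finset.range (ell m i)).image (fun j => i * 2 ^ j % (2 ^ m - 1))

noncomputable def rho (m i : ℕ) : ℕ := ((coset m i).filter (fun x => x % 2 = 0)).card

noncomputable def vv (m i : ℕ) : ℕ := m * rho m i / ell m i % 2

noncomputable def Tset (m j : ℕ) : Finset ℕ :=
  (Finset.range (2 ^ m - 1)).filter (fun i => vv m i = j)

noncomputable def Nset (m j : ℕ) : Finset ℕ :=
  (Finset.range (2 ^ m - 1)).filter (fun a => a ≠ 0 ∧ wt2 a % 2 = j)

noncomputable def epsilon (h a : ℕ) : ℕ :=
  if a = 2 ^ h - 1 then 1 else sInf {t : ℕ | 2 ^ h - 1 ≤ 2 ^ t * a}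

noncomputable def kappa (h a : ℕ) : ℕ := epsilon h a % 2

noncomputable def leader (m i : ℕ) : ℕ := sInf {x : ℕ | x ∈ coset m i}

noncomputable def uu (m h i : ℕ) : ℕ :=
  if leader m i = 1 then (vv m 1 + h + 1) % 2
  else if leader m i % 2 = 1 ∧ leader m i ≤ 2 ^ h - 1 then
    (kappa h (leader m i) + vv m (leader m i)) % 2
  else vv m (leader m i)

noncomputable def Dset (m h j : ℕ) : Finset ℕ :=
  (Finset.range (2 ^ m - 1)).filter (fun i => uu m h i = j)

noncomputable def cyclicCode (m : ℕ) (α : GaloisField 2 m) (T : Set ℕ) :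
    Submodule (ZMod 2) (Polynomial (ZMod 2)) :=
  Polynomial.degreeLT (ZMod 2) (2 ^ m - 1) ⊓
    ⨅ j ∈ T, LinearMap.ker (Polynomial.aeval (α ^ j)).toLinearMap

def minDistGE (C : Submodule (ZMod 2) (Polynomial (ZMod 2))) (d : ℕ) : Prop :=
  ∀ c ∈ C, c ≠ 0 → d ≤ c.support.card

lemma wt2_zero : wt2 0 = 0 := by simp [wt2]

lemma wt2_def (a : ℕ) (ha : 0 < a) : wt2 a = a % 2 + wt2 (a / 2) := by
  rw [wt2, Nat.digits_def' (by norm_num) ha]; simp [wt2]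

lemma wt2_two_mul (a : ℕ) : wt2 (2 * a) = wt2 a := by
  rcases Nat.eq_zero_or_pos a with h | h
  · simp [h, wt2_zero]
  · rw [wt2_def _ (by omega)]
    simp [Nat.mul_div_cancel_left _ (by norm_num : (0:ℕ) < 2), Nat.mul_mod_right]

lemma wt2_bit (a r : ℕ) (hr : r < 2) : wt2 (2 * a + r) = wt2 a + r := by
  rcases Nat.eq_zero_or_pos (2 * a + r) with h | h
  · interval_cases r <;> simp_all [wt2_zero] <;> omega
  · rw [wt2_def _ h]
    have h1 : (2 * a + r) % 2 = r := by omega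
    have h2 : (2 * a + r) / 2 = a := by omega
    rw [h1, h2]; omega

lemma wt2_mul_pow (a k : ℕ) : wt2 (a * 2 ^ k) = wt2 a := by
  induction k with
  | zero => simp
  | succ k ih => rw [pow_succ, ← mul_assoc, Nat.mul_comm (a * 2 ^ k) 2, wt2_two_mul, ih]

/-- no-carry addition -/
lemma wt2_add_mul_pow (a r k : ℕ) (hr : r < 2 ^ k) : wt2 (a * 2 ^ k + r) = wt2 a + wt2 r := by
  induction k generalizing r with
  | zero => interval_cases r; simp [wt2_zero]
  | succ k ih =>
    have h2 : a * 2 ^ (k+1) + r = 2 * (a * 2 ^ k + r / 2) + r % 2 := by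
      have : a * 2 ^ (k+1) = 2 * (a * 2 ^ k) := by ring
      omega
    rw [h2, wt2_bit _ _ (Nat.mod_lt _ (by norm_num)), ih _ (by omega)]
    rcases Nat.eq_zero_or_pos r with h | h
    · simp [h, wt2_zero]
    · rw [wt2_def r h]; omega

lemma wt2_lt_pow (i m : ℕ) (h : i < 2 ^ m) : wt2 i ≤ m := by
  induction m generalizing i with
  | zero => interval_cases i; simp [wt2_zero]
  | succ m ih =>
    rcases Nat.eq_zero_or_pos i with h0 | h0
    · simp [h0, wt2_zero]
    · rw [wt2_def i h0]
      have := ih (i / 2) (by omega)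
      omega

/-- complement -/
lemma wt2_compl (m x : ℕ) (h : x ≤ 2 ^ m - 1) : wt2 (2 ^ m - 1 - x) = m - wt2 x := by
  induction m generalizing x with
  | zero => interval_cases x <;> simp [wt2_zero]
  | succ m ih =>
    have hx2 : x / 2 ≤ 2 ^ m - 1 := by have := Nat.one_le_two_pow (n := m); omega
    have key : 2 ^ (m+1) - 1 - x = 2 * (2 ^ m - 1 - x / 2) + (1 - x % 2) := by
      have h1 : x % 2 < 2 := Nat.mod_lt _ (by norm_num)
      have h2 : x = 2 * (x / 2) + x % 2 := (Nat.div_add_mod' x 2).symm ▸ by omega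
      have h3 : 2 ^ (m+1) = 2 * 2 ^ m := by ring
      have h4 : x / 2 ≤ 2 ^ m - 1 := hx2
      have := Nat.one_le_two_pow (n := m)
      omega
    rw [key, wt2_bit _ _ (by omega), ih _ hx2]
    have hw : wt2 x = x % 2 + wt2 (x / 2) := by
      rcases Nat.eq_zero_or_pos x with h0 | h0
      · simp [h0, wt2_zero]
      · exact wt2_def x h0
    have hwx : wt2 (x / 2) ≤ m := wt2_lt_pow _ _ (by have := Nat.one_le_two_pow (n := m); omega)
    have h1 : x % 2 < 2 := Nat.mod_lt _ (by norm_num)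
    omega

/-- wt2 as sum of bits -/
lemma wt2_eq_bitsum (m i : ℕ) (h : i < 2 ^ m) :
    wt2 i = ∑ b ∈ Finset.range m, i / 2 ^ b % 2 := by
  induction m generalizing i with
  | zero => interval_cases i; simp [wt2_zero]
  | succ m ih =>
    rcases Nat.eq_zero_or_pos i with h0 | h0
    · simp [h0, wt2_zero]
    · rw [wt2_def i h0, Finset.sum_range_succ' (fun b => i / 2 ^ b % 2) m]
      rw [ih (i / 2) (by omega)]
      simp only [pow_zero, Nat.div_one]
      have : ∀ b, i / 2 ^ (b + 1) = i / 2 / 2 ^ b := by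
        intro b; rw [pow_succ, Nat.mul_comm, Nat.div_div_eq_div_mul, Nat.mul_comm]
      simp only [this]; omega

/-- number of even-weight integers below 2^m -/
lemma card_even_wt (m : ℕ) (hm : 1 ≤ m) :
    ((Finset.range (2 ^ m)).filter (fun i => wt2 i % 2 = 0)).card = 2 ^ (m - 1) := by
  induction m with
  | zero => omega
  | succ m ih =>
    rcases Nat.eq_zero_or_pos m with h0 | h0
    · subst h0
      have h1 : wt2 1 = 1 := by rw [wt2_def 1 one_pos]; simp [wt2_zero]
      have : (Finset.range (2 ^ 1)).filter (fun i => wt2 i % 2 = 0) = {0} := by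
        have : Finset.range (2 ^ 1) = {0, 1} := by decide
        rw [this]
        rw [Finset.filter_insert]
        rw [if_pos (by simp [wt2_zero])]
        have : Finset.filter (fun i => wt2 i % 2 = 0) ({1} : Finset ℕ) = ∅ := by
          rw [Finset.filter_singleton, if_neg (by simp [h1])]
        rw [this]
        rfl
      rw [this]; simp
    · have ihm := ih h0
      have hsplit : Finset.range (2 ^ (m+1)) =
          Finset.range (2 ^ m) ∪ (Finset.range (2 ^ m)).image (fun i => i + 2 ^ m) := by
        ext x
        simp only [Finset.mem_union, Finset.mem_range, Finset.mem_image]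
        constructor
        · intro hx
          rcases Nat.lt_or_ge x (2 ^ m) with h | h
          · exact Or.inl h
          · right; exact ⟨x - 2 ^ m, by constructor <;> [skip; omega] ; rw [pow_succ] at hx; omega⟩
        · rintro (h | ⟨i, hi, rfl⟩) <;> [skip; skip] <;> rw [pow_succ] <;> omega
      have hdisj : Disjoint (Finset.range (2 ^ m))
          ((Finset.range (2 ^ m)).image (fun i => i + 2 ^ m)) := by
        rw [Finset.disjoint_left]
        intro x hx hx2
        simp only [Finset.mem_image, Finset.mem_range] at hx hx2
        obtain ⟨i, _, rfl⟩ := hx2; omega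
      have hwt : ∀ i < 2 ^ m, wt2 (i + 2 ^ m) = wt2 i + 1 := by
        intro i hi
        have := wt2_add_mul_pow 1 i m hi
        have h1 : wt2 1 = 1 := by rw [wt2_def 1 one_pos]; simp [wt2_zero]
        rw [h1] at this
        rw [Nat.add_comm]
        rw [show 1 * 2 ^ m + i = 2 ^ m + i from by ring] at this
        omega
      rw [hsplit, Finset.filter_union, Finset.card_union_of_disjoint
        (Finset.disjoint_filter_filter hdisj)]
      have himg : (((Finset.range (2 ^ m)).image (fun i => i + 2 ^ m)).filter
          (fun i => wt2 i % 2 = 0)).card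
          = ((Finset.range (2 ^ m)).filter (fun i => wt2 i % 2 = 1)).card := by
        rw [Finset.filter_image]
        rw [Finset.card_image_of_injective _ (fun a b h => by omega)]
        congr 1
        apply Finset.filter_congr
        intro x hx
        simp only [Finset.mem_range] at hx
        rw [hwt x hx]
        constructor <;> intro h <;> omega
      rw [himg]
      have hcompl : ((Finset.range (2 ^ m)).filter (fun i => wt2 i % 2 = 1)).card
          = 2 ^ m - 2 ^ (m - 1) := by
        have := Finset.card_filter_add_card_filter_not
          (s := Finset.range (2 ^ m)) (p := fun i => wt2 i % 2 = 0)
        simp only [Finset.card_range] at this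
        have heq : ∀ x, ¬(wt2 x % 2 = 0) ↔ wt2 x % 2 = 1 := by intro x; omega
        rw [Finset.filter_congr (fun x _ => heq x)] at this
        omega
      rw [ihm, hcompl]
      have h1 : 2 ^ (m - 1) ≤ 2 ^ m := Nat.pow_le_pow_right (by norm_num) (by omega)
      have h2 : 2 ^ m = 2 ^ (m - 1) * 2 := by
        rw [← pow_succ]; congr 1; omega
      simp only [Nat.add_sub_cancel]
      omega

/-- key divisibility: d ∣ 2^x - 1 → d ∣ 2^y - 1 → d ∣ 2^(gcd x y) - 1 -/
lemma dvd_pow_gcd_sub_one (d : ℕ) : ∀ x y : ℕ, d ∣ 2 ^ x - 1 → d ∣ 2 ^ y - 1 →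
    d ∣ 2 ^ Nat.gcd x y - 1 := by
  intro x
  induction x using Nat.strong_induction_on with
  | _ x ih =>
    intro y hx hy
    rcases Nat.eq_zero_or_pos x with h0 | h0
    · subst h0; simpa [Nat.gcd_zero_left] using hy
    · rw [Nat.gcd_rec]
      refine ih (y % x) (Nat.mod_lt _ h0) x ?_ hx
      -- d ∣ 2^(y % x) - 1, from d ∣ 2^y - 1, d ∣ 2^x - 1
      have hdec : 2 ^ y - 1 = 2 ^ (y % x) * (2 ^ (x * (y / x)) - 1) + (2 ^ (y % x) - 1) := by
        have h1 : 1 ≤ 2 ^ (x * (y / x)) := Nat.one_le_two_pow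
        have h2 : 1 ≤ 2 ^ (y % x) := Nat.one_le_two_pow
        have h3 : 2 ^ (y % x) * 2 ^ (x * (y / x)) = 2 ^ y := by
          rw [← pow_add, Nat.mod_add_div]
        calc 2 ^ y - 1 = 2 ^ (y % x) * 2 ^ (x * (y / x)) - 1 := by rw [h3]
        _ = 2 ^ (y % x) * (2 ^ (x * (y / x)) - 1) + (2 ^ (y % x) - 1) := by
            have h4 : 2 ^ (y % x) * (2 ^ (x * (y / x)) - 1)
                = 2 ^ (y % x) * 2 ^ (x * (y / x)) - 2 ^ (y % x) * 1 := by
              rw [Nat.mul_sub]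
            have h5 : 2 ^ (y % x) * 1 ≤ 2 ^ (y % x) * 2 ^ (x * (y / x)) :=
              Nat.mul_le_mul_left _ h1
            omega
      have hdvd1 : d ∣ 2 ^ (x * (y / x)) - 1 := by
        apply dvd_trans hx
        have : (2:ℕ) ^ x - 1 ∣ (2 ^ x) ^ (y / x) - 1 ^ (y / x) := Nat.sub_dvd_pow_sub_pow _ 1 _
        simpa [← pow_mul] using this
      have hX : d ∣ 2 ^ (y % x) * (2 ^ (x * (y / x)) - 1) := Dvd.dvd.mul_left hdvd1 _
      have hsub := Nat.dvd_sub hy hX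
      have : 2 ^ y - 1 - 2 ^ (y % x) * (2 ^ (x * (y / x)) - 1) = 2 ^ (y % x) - 1 := by omega
      rwa [this] at hsub

lemma period_m (m i : ℕ) : i * 2 ^ m % (2 ^ m - 1) = i % (2 ^ m - 1) := by
  have h1 : 1 ≤ 2 ^ m := Nat.one_le_two_pow
  have h2 : i * 1 ≤ i * 2 ^ m := Nat.mul_le_mul_left _ h1
  have h3 : i + i * (2 ^ m - 1) = i * 2 ^ m := by rw [Nat.mul_sub]; omega
  calc i * 2 ^ m % (2 ^ m - 1) = (i + i * (2 ^ m - 1)) % (2 ^ m - 1) := by rw [h3]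
  _ = i % (2 ^ m - 1) := Nat.add_mul_mod_self_right i i (2 ^ m - 1)

lemma ell_spec (m i : ℕ) (hm : 0 < m) :
    0 < ell m i ∧ i * 2 ^ (ell m i) % (2 ^ m - 1) = i % (2 ^ m - 1) := by
  have hne : {l : ℕ | 0 < l ∧ i * 2 ^ l % (2 ^ m - 1) = i % (2 ^ m - 1)}.Nonempty :=
    ⟨m, hm, period_m m i⟩
  exact Nat.sInf_mem hne

lemma ell_min (m i : ℕ) {l : ℕ} (hl : 0 < l)
    (hper : i * 2 ^ l % (2 ^ m - 1) = i % (2 ^ m - 1)) :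
    ell m i ≤ l := Nat.sInf_le ⟨hl, hper⟩

lemma ell_le_m (m i : ℕ) (hm : 0 < m) : ell m i ≤ m := ell_min m i hm (period_m m i)

lemma period_add (m i : ℕ) (hm : 0 < m) (j : ℕ) :
    i * 2 ^ (j + ell m i) % (2 ^ m - 1) = i * 2 ^ j % (2 ^ m - 1) := by
  have h := (ell_spec m i hm).2
  have hme : i * 2 ^ ell m i ≡ i [MOD 2 ^ m - 1] := h
  calc i * 2 ^ (j + ell m i) % (2 ^ m - 1)
      = (i * 2 ^ ell m i) * 2 ^ j % (2 ^ m - 1) := by rw [mul_assoc, ← pow_add]; ring_nf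
    _ = i * 2 ^ j % (2 ^ m - 1) := (hme.mul_right (2 ^ j) : _)

lemma period_mod (m i : ℕ) (hm : 0 < m) (j : ℕ) :
    i * 2 ^ j % (2 ^ m - 1) = i * 2 ^ (j % ell m i) % (2 ^ m - 1) := by
  have hL := (ell_spec m i hm).1
  induction j using Nat.strong_induction_on with
  | _ j ih =>
    rcases Nat.lt_or_ge j (ell m i) with h | h
    · rw [Nat.mod_eq_of_lt h]
    · have h1 : j = (j - ell m i) + ell m i := by omega
      rw [h1, period_add m i hm, ih _ (by omega), Nat.add_mod_right]

lemma ell_dvd_m (m i : ℕ) (hm : 0 < m) : ell m i ∣ m := by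
  have hL := (ell_spec m i hm).1
  have h1 := period_mod m i hm m
  rw [period_m m i] at h1
  by_contra h
  have h2 : 0 < m % ell m i := Nat.pos_of_ne_zero (fun hc => h (Nat.dvd_of_mod_eq_zero hc))
  have h3 := ell_min m i h2 h1.symm
  have := Nat.mod_lt m hL
  omega

lemma ell_inj (m i : ℕ) (hm : 0 < m) {j1 j2 : ℕ} (h1 : j1 < ell m i) (h2 : j2 < ell m i)
    (heq : i * 2 ^ j1 % (2 ^ m - 1) = i * 2 ^ j2 % (2 ^ m - 1)) : j1 = j2 := by
  have hL := (ell_spec m i hm).1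
  have key : ∀ a b : ℕ, a < b → b < ell m i →
      i * 2 ^ a % (2 ^ m - 1) = i * 2 ^ b % (2 ^ m - 1) → False := by
    intro a b hab hb hab2
    have step : i * 2 ^ (a + (ell m i - b)) % (2 ^ m - 1)
        = i * 2 ^ (b + (ell m i - b)) % (2 ^ m - 1) := by
      have hme : i * 2 ^ a ≡ i * 2 ^ b [MOD 2 ^ m - 1] := hab2
      have := hme.mul_right (2 ^ (ell m i - b))
      calc i * 2 ^ (a + (ell m i - b)) % (2 ^ m - 1)
          = (i * 2 ^ a) * 2 ^ (ell m i - b) % (2 ^ m - 1) := by rw [mul_assoc, ← pow_add]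
        _ = (i * 2 ^ b) * 2 ^ (ell m i - b) % (2 ^ m - 1) := this
        _ = i * 2 ^ (b + (ell m i - b)) % (2 ^ m - 1) := by rw [mul_assoc, ← pow_add]
    rw [show b + (ell m i - b) = ell m i from by omega, (ell_spec m i hm).2] at step
    have hmin := ell_min m i (l := a + (ell m i - b)) (by omega) step
    omega
  rcases Nat.lt_trichotomy j1 j2 with h | h | h
  · exact absurd (key j1 j2 h h2 heq) (fun x => x)
  · exact h
  · exact absurd (key j2 j1 h h1 heq.symm) (fun x => x)

/-- blockwise filter counting -/
lemma filter_mod_card (L q : ℕ) (hL : 0 < L) (p : ℕ → Prop) [DecidablePred p] :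
    ((Finset.range (L * q)).filter (fun j => p (j % L))).card
      = q * ((Finset.range L).filter p).card := by
  induction q with
  | zero => simp
  | succ q ih =>
    have hsplit : Finset.range (L * (q + 1)) =
        Finset.range (L * q) ∪ (Finset.range L).image (fun r => L * q + r) := by
      ext x
      simp only [Finset.mem_union, Finset.mem_range, Finset.mem_image]
      constructor
      · intro hx
        rcases Nat.lt_or_ge x (L * q) with h | h
        · exact Or.inl h
        · right
          refine ⟨x - L * q, ?_, by omega⟩
          have : L * (q + 1) = L * q + L := by ring
          omega
      · rintro (h | ⟨r, hr, rfl⟩)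
        · have : L * q ≤ L * (q + 1) := Nat.mul_le_mul_left _ (by omega)
          omega
        · have : L * (q + 1) = L * q + L := by ring
          omega
    have himg : (((Finset.range L).image (fun r => L * q + r)).filter
        (fun j => p (j % L))).card = ((Finset.range L).filter p).card := by
      rw [Finset.filter_image, Finset.card_image_of_injective _ (fun a b h => by omega)]
      congr 1
      apply Finset.filter_congr
      intro r hr
      simp only [Finset.mem_range] at hr
      rw [Nat.mul_add_mod, Nat.mod_eq_of_lt hr]
    have hdisj : Disjoint ((Finset.range (L * q)).filter (fun j => p (j % L)))
        (((Finset.range L).image (fun r => L * q + r)).filter (fun j => p (j % L))) := by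
      apply Finset.disjoint_filter_filter
      rw [Finset.disjoint_left]
      intro x hx hx2
      simp only [Finset.mem_image, Finset.mem_range] at hx hx2
      obtain ⟨r, _, rfl⟩ := hx2; omega
    rw [hsplit, Finset.filter_union, Finset.card_union_of_disjoint hdisj, ih, himg]
    ring

/-- rotation formula -/
lemma rot_formula (m i j : ℕ) (hj : j < m) (hin : i < 2 ^ m - 1) :
    i * 2 ^ j % (2 ^ m - 1) = i / 2 ^ (m - j) + i % 2 ^ (m - j) * 2 ^ j := by
  set A : ℕ := 2 ^ j with hA
  set B : ℕ := 2 ^ (m - j) with hB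
  have hAB : A * B = 2 ^ m := by rw [hA, hB, ← pow_add]; congr 1; omega
  have hBpos : 0 < B := Nat.pow_pos (by norm_num)
  have hApos : 0 < A := Nat.pow_pos (by norm_num)
  have h2m1 : 1 ≤ 2 ^ m := Nat.one_le_two_pow
  set hi' : ℕ := i / B with hhi
  set lo : ℕ := i % B with hlo
  have hdecomp : i = hi' * B + lo := (Nat.div_add_mod' i B).symm
  have hlolt : lo < B := Nat.mod_lt _ hBpos
  have hhilt : hi' < A := by
    rw [hhi, Nat.div_lt_iff_lt_mul hBpos]
    exact lt_of_lt_of_eq (by omega) hAB.symm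
  have hexp : i * A = hi' * 2 ^ m + lo * A := by
    calc i * A = (hi' * B + lo) * A := by rw [← hdecomp]
    _ = hi' * (A * B) + lo * A := by ring
    _ = hi' * 2 ^ m + lo * A := by rw [hAB]
  have hsplit2 : hi' * 2 ^ m + lo * A = hi' + lo * A + hi' * (2 ^ m - 1) := by
    have h2 : hi' * 1 ≤ hi' * 2 ^ m := Nat.mul_le_mul_left _ h2m1
    rw [Nat.mul_sub]
    omega
  have hmod : i * A % (2 ^ m - 1) = (hi' + lo * A) % (2 ^ m - 1) := by
    rw [hexp, hsplit2, Nat.add_mul_mod_self_right]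
  have hlt : hi' + lo * A < 2 ^ m - 1 := by
    by_contra hcon
    push_neg at hcon
    have h1 : lo * A ≤ (B - 1) * A := Nat.mul_le_mul_right _ (by omega)
    have hAle : A ≤ B * A := Nat.le_mul_of_pos_left _ hBpos
    have h2 : (B - 1) * A + A = B * A := by rw [Nat.sub_mul]; omega
    have hBA : B * A = 2 ^ m := by rw [Nat.mul_comm]; exact hAB
    have h3 : (B - 1) * A ≤ lo * A := by omega
    have h4 : lo = B - 1 :=
      le_antisymm (by omega) (Nat.le_of_mul_le_mul_right (by omega) hApos)
    have h5 : hi' = A - 1 := by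
      have : lo * A = (B - 1) * A := by rw [h4]
      omega
    have hBle : B ≤ A * B := Nat.le_mul_of_pos_left _ hApos
    have h6 : (A - 1) * B + B = A * B := by rw [Nat.sub_mul]; omega
    have : i = 2 ^ m - 1 := by rw [hdecomp, h4, h5]; omega
    omega
  rw [hmod, Nat.mod_eq_of_lt hlt]

lemma parity_rot (m i j : ℕ) (hj : j < m) (hin : i < 2 ^ m - 1) :
    (i * 2 ^ j % (2 ^ m - 1)) % 2 = i / 2 ^ ((m - j) % m) % 2 := by
  rcases Nat.eq_zero_or_pos j with h0 | h0
  · subst h0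
    have hm0 : 0 < m := by omega
    simp only [pow_zero, Nat.mul_one, Nat.sub_zero, Nat.mod_self, Nat.div_one]
    rw [Nat.mod_eq_of_lt hin]
  · rw [rot_formula m i j hj hin]
    have h1 : (m - j) % m = m - j := Nat.mod_eq_of_lt (by omega)
    rw [h1]
    have h3 : 2 ^ j % 2 = 0 := by
      rw [Nat.pow_mod]
      norm_num
      rw [Nat.zero_pow h0]
    have h2 : i % 2 ^ (m - j) * 2 ^ j % 2 = 0 := by
      rw [Nat.mul_mod, h3]
      simp
    omega

lemma count_even_rot (m i : ℕ) (hm : 0 < m) (hin : i < 2 ^ m - 1) :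
    ((Finset.range m).filter (fun j => (i * 2 ^ j % (2 ^ m - 1)) % 2 = 0)).card
      = m - wt2 i := by
  have key : ((Finset.range m).filter (fun j => (i * 2 ^ j % (2 ^ m - 1)) % 2 = 0)).card
      = ((Finset.range m).filter (fun b => i / 2 ^ b % 2 = 0)).card := by
    apply Finset.card_nbij' (i := fun j => (m - j) % m) (j := fun b => (m - b) % m)
    · intro j hj
      simp only [Finset.mem_coe, Finset.mem_filter, Finset.mem_range] at hj ⊢
      refine ⟨Nat.mod_lt _ hm, ?_⟩
      rw [← parity_rot m i j hj.1 hin]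
      exact hj.2
    · intro b hb
      simp only [Finset.mem_coe, Finset.mem_filter, Finset.mem_range] at hb ⊢
      refine ⟨Nat.mod_lt _ hm, ?_⟩
      rw [parity_rot m i ((m - b) % m) (Nat.mod_lt _ hm) hin]
      have : (m - (m - b) % m) % m = b := by
        rcases Nat.eq_zero_or_pos b with h0 | h0
        · subst h0; simp
        · have h1 : (m - b) % m = m - b := Nat.mod_eq_of_lt (by omega)
          rw [h1]
          have h2 : m - (m - b) = b := by omega
          rw [h2, Nat.mod_eq_of_lt hb.1]
      rw [this]
      exact hb.2
    · intro j hj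
      simp only [Finset.mem_coe, Finset.mem_filter, Finset.mem_range] at hj
      rcases Nat.eq_zero_or_pos j with h0 | h0
      · subst h0; simp
      · have h1 : (m - j) % m = m - j := Nat.mod_eq_of_lt (by omega)
        simp only [h1]
        have h2 : m - (m - j) = j := by omega
        rw [h2, Nat.mod_eq_of_lt hj.1]
    · intro b hb
      simp only [Finset.mem_coe, Finset.mem_filter, Finset.mem_range] at hb
      rcases Nat.eq_zero_or_pos b with h0 | h0
      · subst h0; simp
      · have h1 : (m - b) % m = m - b := Nat.mod_eq_of_lt (by omega)
        simp only [h1]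
        have h2 : m - (m - b) = b := by omega
        rw [h2, Nat.mod_eq_of_lt hb.1]
  rw [key]
  have hbits : ((Finset.range m).filter (fun b => ¬ (i / 2 ^ b % 2 = 0))).card
      = wt2 i := by
    rw [Finset.card_filter]
    rw [wt2_eq_bitsum m i (by have : (1:ℕ) ≤ 2 ^ m := Nat.one_le_two_pow; omega)]
    apply Finset.sum_congr rfl
    intro b _
    have : i / 2 ^ b % 2 < 2 := Nat.mod_lt _ (by norm_num)
    split <;> omega
  have htot := Finset.card_filter_add_card_filter_not
    (s := Finset.range m) (p := fun b => i / 2 ^ b % 2 = 0)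
  simp only [Finset.card_range] at htot
  omega

theorem vv_eq_wt2 (m i : ℕ) (hm0 : 0 < m) (hme : m % 2 = 0) (hin : i < 2 ^ m - 1) :
    vv m i = wt2 i % 2 := by
  rcases Nat.eq_zero_or_pos i with h0 | h0
  · subst h0
    have hL : ell m 0 = 1 := by
      have h1 := (ell_spec m 0 hm0).1
      have h2 : ell m 0 ≤ 1 := ell_min m 0 one_pos (by simp)
      omega
    have hco : coset m 0 = {0} := by
      rw [coset, hL]
      simp
    rw [vv, rho, hco, hL]
    have : ({0} : Finset ℕ).filter (fun x => x % 2 = 0) = {0} := by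
      rw [Finset.filter_singleton, if_pos (by norm_num)]
    rw [this]
    simp [wt2_zero, hme]
  · have hL := (ell_spec m i hm0).1
    obtain ⟨k, hk⟩ := ell_dvd_m m i hm0
    set L := ell m i with hLdef
    have hA : m * rho m i / L = k * rho m i := by
      rw [hk, mul_assoc, Nat.mul_div_cancel_left _ hL]
    have hB : ((Finset.range m).filter (fun j => (i * 2 ^ j % (2 ^ m - 1)) % 2 = 0)).card
        = k * rho m i := by
      have hcongr : ((Finset.range m).filter
            (fun j => (i * 2 ^ j % (2 ^ m - 1)) % 2 = 0)).card
          = ((Finset.range (L * k)).filter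
            (fun j => (i * 2 ^ (j % L) % (2 ^ m - 1)) % 2 = 0)).card := by
        rw [← hk]
        congr 1
        apply Finset.filter_congr
        intro j _
        rw [← period_mod m i hm0 j]
      have hfmc := filter_mod_card L k hL (fun r => i * 2 ^ r % (2 ^ m - 1) % 2 = 0)
      rw [hcongr, hfmc]
      congr 1
      -- ((range L).filter (fun r => even (i*2^r % n))).card = rho m i
      rw [rho, coset, ← hLdef, Finset.filter_image]
      rw [Finset.card_image_of_injOn]
      intro a ha b hb hab
      simp only [Finset.mem_coe, Finset.mem_filter, Finset.mem_range] at ha hb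
      exact ell_inj m i hm0 ha.1 hb.1 hab
    rw [vv, hA, ← hB, count_even_rot m i hm0 hin]
    have hwle : wt2 i ≤ m := wt2_lt_pow i m (by have : (1:ℕ) ≤ 2 ^ m := Nat.one_le_two_pow; omega)
    omega

theorem Tset_eq (m : ℕ) (hm0 : 0 < m) (hme : m % 2 = 0) :
    Tset m 0 = (Finset.range (2 ^ m - 1)).filter (fun i => wt2 i % 2 = 0) := by
  apply Finset.filter_congr
  intro i hi
  simp only [Finset.mem_range] at hi
  rw [vv_eq_wt2 m i hm0 hme hi]

theorem Tset_card (m : ℕ) (hm0 : 0 < m) (hme : m % 2 = 0) :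
    (Tset m 0).card = 2 ^ (m - 1) - 1 := by
  rw [Tset_eq m hm0 hme]
  have h2m : 1 ≤ 2 ^ m := Nat.one_le_two_pow
  have hsplit : Finset.range (2 ^ m) = insert (2 ^ m - 1) (Finset.range (2 ^ m - 1)) := by
    ext x
    simp only [Finset.mem_insert, Finset.mem_range]
    omega
  have hwn : wt2 (2 ^ m - 1) % 2 = 0 := by
    have := wt2_compl m 0 (by omega)
    rw [Nat.sub_zero] at this
    rw [this, wt2_zero, Nat.sub_zero, hme]
  have := card_even_wt m (by omega)
  rw [hsplit, Finset.filter_insert, if_pos hwn, Finset.card_insert_of_notMem (by simp)] at this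
  omega

section Alg
variable (m : ℕ) (α : GaloisField 2 m)

lemma wt2_one : wt2 1 = 1 := by rw [wt2_def 1 one_pos]; simp [wt2_zero]

lemma mem_cyclicCode_iff (T : Finset ℕ) (c : Polynomial (ZMod 2)) :
    c ∈ cyclicCode m α (↑T : Set ℕ) ↔
      c ∈ degreeLT (ZMod 2) (2 ^ m - 1) ∧ ∀ j ∈ T, (Polynomial.aeval (α ^ j)) c = 0 := by
  simp only [cyclicCode, Submodule.mem_inf, Submodule.mem_iInf, LinearMap.mem_ker,
    AlgHom.toLinearMap_apply, Finset.mem_coe]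

lemma n_ge (hm2 : 2 < m) : 7 ≤ 2 ^ m - 1 := by
  have : (2:ℕ) ^ 3 ≤ 2 ^ m := Nat.pow_le_pow_right (by norm_num) hm2
  omega

lemma alpha_ne_zero (hm2 : 2 < m) (hα : orderOf α = 2 ^ m - 1) : α ≠ 0 := by
  intro h
  have h1 := pow_orderOf_eq_one α
  rw [hα, h] at h1
  have hn := n_ge m hm2
  rw [zero_pow (by omega : 2 ^ m - 1 ≠ 0)] at h1
  exact zero_ne_one h1

lemma alpha_pow_inj (hm2 : 2 < m) (hα : orderOf α = 2 ^ m - 1) {j1 j2 : ℕ}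
    (h1 : j1 < 2 ^ m - 1) (h2 : j2 < 2 ^ m - 1)
    (heq : α ^ j1 = α ^ j2) : j1 = j2 := by
  have hne := alpha_ne_zero m α hm2 hα
  wlog h : j1 ≤ j2 generalizing j1 j2
  · exact (this h2 h1 heq.symm (by omega)).symm
  have hsplit : α ^ j2 = α ^ j1 * α ^ (j2 - j1) := by rw [← pow_add]; congr 1; omega
  have hone : α ^ (j2 - j1) = 1 := by
    have hp : α ^ j1 ≠ 0 := pow_ne_zero _ hne
    apply mul_left_cancel₀ hp
    rw [mul_one, ← hsplit, ← heq]
  have hdvd := orderOf_dvd_of_pow_eq_one hone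
  rw [hα] at hdvd
  rcases Nat.eq_zero_or_pos (j2 - j1) with h0 | h0
  · omega
  · have := Nat.le_of_dvd h0 hdvd
    omega

lemma alpha_pow_mod (hα : orderOf α = 2 ^ m - 1) (x : ℕ) : α ^ (x % (2 ^ m - 1)) = α ^ x := by
  rw [← hα, pow_mod_orderOf]

/-- doubling fixes weight mod n -/
lemma wt2_double_mod (hm2 : 2 < m) (j : ℕ) (hj : j < 2 ^ m - 1) :
    wt2 (2 * j % (2 ^ m - 1)) = wt2 j := by
  have h2m : 2 ^ m = 2 * 2 ^ (m - 1) := by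
    rw [← pow_succ']; congr 1; omega
  have h1 : 1 ≤ 2 ^ (m - 1) := Nat.one_le_two_pow
  rcases Nat.lt_or_ge (2 * j) (2 ^ m - 1) with h | h
  · rw [Nat.mod_eq_of_lt h, wt2_two_mul]
  · -- j ≥ 2^(m-1), 2j mod n = 2j - n = 2(j - 2^(m-1)) + 1
    have hj2 : 2 ^ (m - 1) ≤ j := by omega
    set u := j - 2 ^ (m - 1) with hu
    have hnle : 2 ^ m - 1 ≤ 2 * j := h
    have hlt : 2 * j - (2 ^ m - 1) < 2 ^ m - 1 := by omega
    have hmod : 2 * j % (2 ^ m - 1) = 2 * u + 1 := by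
      have : 2 * j = (2 ^ m - 1) + (2 * u + 1) := by omega
      rw [this, Nat.add_mod_left, Nat.mod_eq_of_lt (by omega)]
    rw [hmod, wt2_bit u 1 (by norm_num)]
    have hjdec : j = 1 * 2 ^ (m - 1) + u := by omega
    have hult : u < 2 ^ (m - 1) := by omega
    rw [hjdec, wt2_add_mul_pow 1 u (m - 1) hult, wt2_one]
    omega

/-- Tset m 0 is closed under doubling mod n -/
lemma Tset_double (hm0 : 0 < m) (hm2 : 2 < m) (hme : m % 2 = 0) :
    (Tset m 0).image (fun j => 2 * j % (2 ^ m - 1)) = Tset m 0 := by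
  have hn := n_ge m hm2
  have hsub : (Tset m 0).image (fun j => 2 * j % (2 ^ m - 1)) ⊆ Tset m 0 := by
    intro x hx
    simp only [Finset.mem_image] at hx
    obtain ⟨j, hj, rfl⟩ := hx
    rw [Tset_eq m hm0 hme] at hj ⊢
    simp only [Finset.mem_filter, Finset.mem_range] at hj ⊢
    refine ⟨Nat.mod_lt _ (by omega), ?_⟩
    rw [wt2_double_mod m hm2 j hj.1]
    exact hj.2
  apply Finset.eq_of_subset_of_card_le hsub
  rw [Finset.card_image_of_injOn]
  intro a ha b hb hab
  rw [Tset_eq m hm0 hme] at ha hb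
  simp only [Finset.mem_coe, Finset.mem_filter, Finset.mem_range] at ha hb
  -- cancel doubling : multiply by 2^(m-1)
  have key : ∀ x : ℕ, x < 2 ^ m - 1 → 2 ^ (m - 1) * (2 * x % (2 ^ m - 1)) % (2 ^ m - 1) = x := by
    intro x hx
    have h1 : 2 ^ (m - 1) * (2 * x % (2 ^ m - 1)) % (2 ^ m - 1)
        = 2 ^ (m - 1) * (2 * x) % (2 ^ m - 1) := by
      have hn7 := n_ge m hm2
      conv_lhs => rw [Nat.mul_mod]
      conv_rhs => rw [Nat.mul_mod]
      rw [Nat.mod_eq_of_lt (Nat.mod_lt (2 * x) (by omega : 0 < 2 ^ m - 1))]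
    have h2 : 2 ^ (m - 1) * (2 * x) = x * 2 ^ m := by
      rw [show 2 ^ m = 2 * 2 ^ (m - 1) from by rw [← pow_succ']; congr 1; omega]
      ring
    rw [h1, h2, period_m m x, Nat.mod_eq_of_lt hx]
  have hab' : 2 * a % (2 ^ m - 1) = 2 * b % (2 ^ m - 1) := hab
  have := key a ha.1
  rw [hab', key b hb.1] at this
  exact this.symm

section Dim

lemma double_mod_inj (hm2 : 2 < m) {a b : ℕ} (ha : a < 2 ^ m - 1) (hb : b < 2 ^ m - 1)
    (hab : 2 * a % (2 ^ m - 1) = 2 * b % (2 ^ m - 1)) : a = b := by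
  have hn := n_ge m hm2
  have key : ∀ x : ℕ, x < 2 ^ m - 1 →
      2 ^ (m - 1) * (2 * x % (2 ^ m - 1)) % (2 ^ m - 1) = x := by
    intro x hx
    have h1 : 2 ^ (m - 1) * (2 * x % (2 ^ m - 1)) % (2 ^ m - 1)
        = 2 ^ (m - 1) * (2 * x) % (2 ^ m - 1) := by
      conv_lhs => rw [Nat.mul_mod]
      conv_rhs => rw [Nat.mul_mod]
      rw [Nat.mod_eq_of_lt (Nat.mod_lt (2 * x) (by omega : 0 < 2 ^ m - 1))]
    have h2 : 2 ^ (m - 1) * (2 * x) = x * 2 ^ m := by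
      rw [show 2 ^ m = 2 * 2 ^ (m - 1) from by rw [← pow_succ']; congr 1; omega]
      ring
    rw [h1, h2, period_m m x, Nat.mod_eq_of_lt hx]
  have h := key a ha
  rw [hab, key b hb] at h
  exact h.symm

/-- the generator polynomial over F -/
noncomputable def genF (m : ℕ) (α : GaloisField 2 m) : Polynomial (GaloisField 2 m) :=
  ∏ j ∈ Tset m 0, (X - C (α ^ j))

lemma genF_monic : (genF m α).Monic :=
  monic_prod_of_monic _ _ (fun j _ => monic_X_sub_C _)

lemma genF_natDegree : (genF m α).natDegree = (Tset m 0).card := by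
  rw [genF, natDegree_prod_of_monic _ _ (fun j _ => monic_X_sub_C _)]
  rw [Finset.sum_congr rfl fun j _ => natDegree_X_sub_C _]
  simp

lemma genF_eval_zero (j : ℕ) (hj : j ∈ Tset m 0) : eval (α ^ j) (genF m α) = 0 := by
  rw [genF, eval_prod]
  exact Finset.prod_eq_zero hj (by simp)

lemma genF_frob (hm0 : 0 < m) (hm2 : 2 < m) (hme : m % 2 = 0)
    (hα : orderOf α = 2 ^ m - 1) :
    (genF m α).map (frobenius (GaloisField 2 m) 2) = genF m α := by
  rw [genF, Polynomial.map_prod]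
  have h1 : ∀ j ∈ Tset m 0,
      (X - C (α ^ j)).map (frobenius (GaloisField 2 m) 2) = X - C (α ^ (2 * j % (2 ^ m - 1))) := by
    intro j hj
    have hjlt : j < 2 ^ m - 1 := by
      have := (Finset.mem_filter.1 hj).1
      simpa using this
    rw [Polynomial.map_sub, Polynomial.map_X, Polynomial.map_C]
    congr 1
    rw [frobenius_def, ← pow_mul, alpha_pow_mod m α hα]
    congr 1
    ring
  rw [Finset.prod_congr rfl h1]
  conv_rhs => rw [← Tset_double m hm0 hm2 hme]
  rw [Finset.prod_image]
  intro a ha b hb hab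
  have halt : a < 2 ^ m - 1 := by simpa using (Finset.mem_filter.1 ha).1
  have hblt : b < 2 ^ m - 1 := by simpa using (Finset.mem_filter.1 hb).1
  exact double_mod_inj m hm2 halt hblt hab

/-- descend to ZMod 2 -/
lemma genF_lift (hm0 : 0 < m) (hm2 : 2 < m) (hme : m % 2 = 0)
    (hα : orderOf α = 2 ^ m - 1) :
    ∃ g₀ : Polynomial (ZMod 2), g₀.map (algebraMap (ZMod 2) (GaloisField 2 m)) = genF m α := by
  have hfrob := genF_frob m α hm0 hm2 hme hα
  rw [← Polynomial.mem_lifts]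
  rw [Polynomial.lifts_iff_coeff_lifts]
  intro k
  have hk : frobenius (GaloisField 2 m) 2 ((genF m α).coeff k) = (genF m α).coeff k := by
    conv_rhs => rw [← hfrob]
    rw [Polynomial.coeff_map]
  rw [frobenius_def] at hk
  set x := (genF m α).coeff k with hx
  have : x * (x - 1) = 0 := by
    rw [mul_sub, mul_one, ← sq, hk, sub_self]
  rcases mul_eq_zero.1 this with h | h
  · exact ⟨0, by simp [h]⟩
  · refine ⟨1, by simp [sub_eq_zero.1 h]⟩

end Dim

section Rank

lemma natDegree_ge_of_mem (hm2 : 2 < m) (hα : orderOf α = 2 ^ m - 1)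
    {c : Polynomial (ZMod 2)} (hc : c ∈ cyclicCode m α (↑(Tset m 0) : Set ℕ))
    (hc0 : c ≠ 0) : (Tset m 0).card ≤ c.natDegree := by
  classical
  have hmem := (mem_cyclicCode_iff m α _ c).1 hc
  have hinj : Function.Injective (algebraMap (ZMod 2) (GaloisField 2 m)) :=
    (algebraMap (ZMod 2) (GaloisField 2 m)).injective
  set cF := c.map (algebraMap (ZMod 2) (GaloisField 2 m)) with hcF
  have hcF0 : cF ≠ 0 := by
    intro h
    apply hc0
    apply Polynomial.map_injective _ hinj
    rw [Polynomial.map_zero]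
    exact h
  have hroots : ∀ j ∈ Tset m 0, (α ^ j) ∈ cF.roots := by
    intro j hj
    rw [Polynomial.mem_roots hcF0]
    show eval (α ^ j) cF = 0
    rw [hcF, Polynomial.eval_map, ← Polynomial.aeval_def]
    exact hmem.2 j hj
  have himage : (Tset m 0).image (fun j => α ^ j) ⊆ cF.roots.toFinset := by
    intro x hx
    simp only [Finset.mem_image] at hx
    obtain ⟨j, hj, rfl⟩ := hx
    rw [Multiset.mem_toFinset]
    exact hroots j hj
  have hcard : ((Tset m 0).image (fun j => α ^ j)).card = (Tset m 0).card := by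
    apply Finset.card_image_of_injOn
    intro a ha b hb hab
    have halt : a < 2 ^ m - 1 := by simpa using (Finset.mem_filter.1 ha).1
    have hblt : b < 2 ^ m - 1 := by simpa using (Finset.mem_filter.1 hb).1
    exact alpha_pow_inj m α hm2 hα halt hblt hab
  calc (Tset m 0).card = ((Tset m 0).image (fun j => α ^ j)).card := hcard.symm
    _ ≤ cF.roots.toFinset.card := Finset.card_le_card himage
    _ ≤ Multiset.card cF.roots := Multiset.toFinset_card_le _
    _ ≤ cF.natDegree := Polynomial.card_roots' cF
    _ = c.natDegree := natDegree_map_eq_of_injective hinj c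

theorem code_finrank (hm0 : 0 < m) (hm2 : 2 < m) (hme : m % 2 = 0)
    (hα : orderOf α = 2 ^ m - 1) :
    Module.finrank (ZMod 2) ↥(cyclicCode m α (↑(Tset m 0) : Set ℕ)) = 2 ^ (m - 1) := by
  classical
  have hn := n_ge m hm2
  set n : ℕ := 2 ^ m - 1 with hn_def
  set K : ℕ := (Tset m 0).card with hK
  set C : Submodule (ZMod 2) (Polynomial (ZMod 2)) := cyclicCode m α (↑(Tset m 0) : Set ℕ)
    with hC
  have hKcard : K = 2 ^ (m - 1) - 1 := Tset_card m hm0 hme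
  have h2m : 2 ^ m = 2 * 2 ^ (m - 1) := by rw [← pow_succ']; congr 1; omega
  have h2m1 : 1 ≤ 2 ^ (m - 1) := Nat.one_le_two_pow
  have hKn : K ≤ n := by omega
  set d : ℕ := n - K with hd
  have hdval : d = 2 ^ (m - 1) := by omega
  -- the injective coefficient map
  set φ : ↥C →ₗ[ZMod 2] (Fin d → ZMod 2) :=
    LinearMap.pi (fun k : Fin d => (Polynomial.lcoeff (ZMod 2) (K + (k : ℕ))).comp C.subtype)
    with hφdef
  have hφzero : ∀ c : ↥C, φ c = 0 → c = 0 := by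
    intro c hczero
    have hcoeffs : ∀ k : Fin d, (c : Polynomial (ZMod 2)).coeff (K + (k : ℕ)) = 0 := by
      intro k
      have := congrFun hczero k
      simpa [hφdef] using this
    ext1
    by_contra hne
    have hdeg_ge : K ≤ (c : Polynomial (ZMod 2)).natDegree :=
      natDegree_ge_of_mem m α hm2 hα c.2 hne
    have hdeglt := (mem_cyclicCode_iff m α _ _).1 c.2
    have hdeg_lt : (c : Polynomial (ZMod 2)).natDegree < n :=
      (Polynomial.natDegree_lt_iff_degree_lt hne).2 (Polynomial.mem_degreeLT.1 hdeglt.1)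
    have hk0 : (c : Polynomial (ZMod 2)).natDegree - K < d := by omega
    have := hcoeffs ⟨(c : Polynomial (ZMod 2)).natDegree - K, hk0⟩
    rw [show K + ((c : Polynomial (ZMod 2)).natDegree - K) =
      (c : Polynomial (ZMod 2)).natDegree from by omega] at this
    exact Polynomial.leadingCoeff_ne_zero.2 hne this
  have hφ : Function.Injective φ := by
    rw [← LinearMap.ker_eq_bot]
    apply (Submodule.eq_bot_iff _).2
    intro c hcmem
    exact hφzero c hcmem
  haveI : FiniteDimensional (ZMod 2) ↥C := FiniteDimensional.of_injective φ hφ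
  have hle1 : Module.finrank (ZMod 2) ↥C ≤ d := by
    have := LinearMap.finrank_le_finrank_of_injective hφ
    rwa [Module.finrank_fin_fun] at this
  -- the generator polynomial lower bound
  obtain ⟨g₀, hg₀⟩ := genF_lift m α hm0 hm2 hme hα
  have hinj : Function.Injective (algebraMap (ZMod 2) (GaloisField 2 m)) :=
    (algebraMap (ZMod 2) (GaloisField 2 m)).injective
  have hg₀deg : g₀.natDegree = K := by
    have h := natDegree_map_eq_of_injective hinj g₀
    rw [hg₀, genF_natDegree] at h
    exact h.symm
  have hg₀ne : g₀ ≠ 0 := by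
    intro h
    have hzero : genF m α = 0 := by rw [← hg₀, h, Polynomial.map_zero]
    exact (genF_monic m α).ne_zero hzero
  set ψ : Polynomial (ZMod 2) →ₗ[ZMod 2] Polynomial (ZMod 2) :=
    LinearMap.mulLeft (ZMod 2) g₀ with hψdef
  have hψinj : Function.Injective ψ := by
    intro a b hab
    simp only [hψdef, LinearMap.mulLeft_apply] at hab
    exact mul_right_injective₀ hg₀ne hab
  set W : Submodule (ZMod 2) (Polynomial (ZMod 2)) :=
    (Polynomial.degreeLT (ZMod 2) d).map ψ with hW
  have haeval_g₀ : ∀ j ∈ Tset m 0, (Polynomial.aeval (α ^ j)) g₀ = 0 := by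
    intro j hj
    have h1 : (Polynomial.aeval (α ^ j)) g₀
        = eval (α ^ j) (g₀.map (algebraMap (ZMod 2) (GaloisField 2 m))) := by
      rw [Polynomial.eval_map, Polynomial.aeval_def]
    rw [h1, hg₀]
    exact genF_eval_zero m α j hj
  have hWle : W ≤ C := by
    rintro x ⟨p, hp, rfl⟩
    rcases eq_or_ne p 0 with rfl | hp0
    · simpa using Submodule.zero_mem C
    · have hgp : ψ p = g₀ * p := by simp [hψdef]
      rw [mem_cyclicCode_iff]
      constructor
      · rw [Polynomial.mem_degreeLT]
        have hmul_ne : g₀ * p ≠ 0 := mul_ne_zero hg₀ne hp0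
        have hpdeg : p.natDegree < d :=
          (Polynomial.natDegree_lt_iff_degree_lt hp0).2 (Polynomial.mem_degreeLT.1 hp)
        have : (g₀ * p).natDegree < n := by
          rw [Polynomial.natDegree_mul hg₀ne hp0, hg₀deg]
          omega
        rw [hgp]
        exact (Polynomial.natDegree_lt_iff_degree_lt hmul_ne).1 this
      · intro j hj
        rw [hgp, map_mul, haeval_g₀ j hj, zero_mul]
  have hWrank : Module.finrank (ZMod 2) ↥W = d := by
    have e1 := Submodule.equivMapOfInjective ψ hψinj (Polynomial.degreeLT (ZMod 2) d)
    rw [hW, ← LinearEquiv.finrank_eq e1,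
      LinearEquiv.finrank_eq (Polynomial.degreeLTEquiv (ZMod 2) d),
      Module.finrank_fin_fun]
  have hle2 : d ≤ Module.finrank (ZMod 2) ↥C := by
    rw [← hWrank]
    exact Submodule.finrank_mono hWle
  omega

end Rank
end Alg

/-- weight of (2^u+1)*d is even for 0 ≤ d ≤ 2^u -/
lemma wt_a_mul_even (u d : ℕ) (hu : 0 < u) (hd : d ≤ 2 ^ u) :
    wt2 ((2 ^ u + 1) * d) % 2 = 0 := by
  rcases Nat.lt_or_ge d (2 ^ u) with h | h
  · have : (2 ^ u + 1) * d = d * 2 ^ u + d := by ring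
    rw [this, wt2_add_mul_pow d d u h]
    omega
  · have hd2 : d = 2 ^ u := by omega
    subst hd2
    rw [wt2_mul_pow (2 ^ u + 1) u]
    have h1 : 2 ^ u + 1 = 1 * 2 ^ u + 1 := by ring
    rw [h1, wt2_add_mul_pow 1 1 u (by
      have : (2:ℕ)^1 ≤ 2 ^ u := Nat.pow_le_pow_right (by norm_num) hu
      omega), wt2_one]

/-- the run lemma: all exponents a*(n - 2^u + k) mod n for k ≤ 2^(u+1) have even weight -/
lemma run_even (m u k : ℕ) (hm2 : 2 < m) (hme : m % 2 = 0) (hu : 0 < u)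
    (h2u : 2 * u + 2 ≤ m) (hk : k ≤ 2 ^ (u + 1)) :
    wt2 ((2 ^ u + 1) * ((2 ^ m - 1 - 2 ^ u) + k) % (2 ^ m - 1)) % 2 = 0 := by
  set n := 2 ^ m - 1 with hn
  set a := 2 ^ u + 1 with ha
  have hn7 := n_ge m hm2
  have h2u_lt : 2 ^ u < 2 ^ m := Nat.pow_lt_pow_right (by norm_num) (by omega)
  have ha2u : a * 2 ^ u < n := by
    have h1 : a * 2 ^ u = 2 ^ (2 * u) + 2 ^ u := by
      rw [ha, add_mul, one_mul, ← pow_add]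
      congr 2
      omega
    have h2 : 2 ^ (2 * u) ≤ 2 ^ (m - 2) := Nat.pow_le_pow_right (by norm_num) (by omega)
    have h3 : 2 ^ u ≤ 2 ^ (m - 2) := Nat.pow_le_pow_right (by norm_num) (by omega)
    have h4 : 2 ^ (m - 2) * 4 = 2 ^ m := by
      rw [show (4:ℕ) = 2 ^ 2 from rfl, ← pow_add]
      congr 1
      omega
    omega
  have h2u_le_n : 2 ^ u < n := lt_of_le_of_lt (Nat.le_mul_of_pos_left _ (by omega)) ha2u
  have hapos : 0 < a := by omega
  rcases Nat.lt_or_ge k (2 ^ u) with hlt | hge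
  · -- negative side : value = n - a*(2^u - k)
    set d := 2 ^ u - k with hd
    have hd_pos : 0 < d := by omega
    have hd_le : d ≤ 2 ^ u := by omega
    have had : a * d ≤ a * 2 ^ u := Nat.mul_le_mul_left _ hd_le
    have hadpos : 0 < a * d := by positivity
    have hx : n - 2 ^ u + k = n - d := by omega
    have hmulsub : a * (n - d) = a * n - a * d := Nat.mul_sub a n d
    have hn_le_an : n ≤ a * n := Nat.le_mul_of_pos_left _ hapos
    have hsub_mul : n * (a - 1) + n = a * n := by
      rw [Nat.mul_sub, Nat.mul_one, Nat.mul_comm n a]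
      omega
    have hsplit : a * (n - d) = n * (a - 1) + (n - a * d) := by
      rw [hmulsub]
      omega
    rw [hx, hsplit, Nat.mul_add_mod, Nat.mod_eq_of_lt (by omega : n - a * d < n)]
    rw [hn, wt2_compl m (a * d) (by omega)]
    have hwle : wt2 (a * d) ≤ m := wt2_lt_pow _ _ (by omega)
    have hweven := wt_a_mul_even u d hu hd_le
    rw [← ha] at hweven
    omega
  · -- positive side : value = a * (k - 2^u)
    set d := k - 2 ^ u with hd
    have hd_le : d ≤ 2 ^ u := by
      have : 2 ^ (u + 1) = 2 * 2 ^ u := by rw [pow_succ]; ring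
      omega
    have had : a * d ≤ a * 2 ^ u := Nat.mul_le_mul_left _ hd_le
    have hx : n - 2 ^ u + k = n + d := by omega
    rw [hx, Nat.mul_add, Nat.add_comm (a * n) (a * d), Nat.add_mul_mod_self_right,
      Nat.mod_eq_of_lt (by omega : a * d < n)]
    have hweven := wt_a_mul_even u d hu hd_le
    rw [← ha] at hweven
    exact hweven

lemma gcd_a_n (l e : ℕ) (hl : 1 ≤ l) (he : Odd e) (he3 : 3 ≤ e) :
    Nat.gcd (2 ^ (2 ^ (l - 1) * (e - 1)) + 1) (2 ^ (2 ^ l * e) - 1) = 1 := by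
  set u := 2 ^ (l - 1) * (e - 1) with hu
  set m := 2 ^ l * e with hm
  set a := 2 ^ u + 1 with ha
  set d := Nat.gcd a (2 ^ m - 1) with hd
  have hl2 : 2 ^ l = 2 * 2 ^ (l - 1) := by rw [← pow_succ']; congr 1; omega
  have hl1pos : 0 < 2 ^ (l - 1) := Nat.pow_pos (by norm_num)
  have hm0 : 0 < m := by
    rw [hm]
    positivity
  have hda : d ∣ a := Nat.gcd_dvd_left _ _
  have hdn : d ∣ 2 ^ m - 1 := Nat.gcd_dvd_right _ _
  have h2u1 : 1 ≤ 2 ^ u := Nat.one_le_two_pow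
  have ha_dvd : a ∣ 2 ^ (2 * u) - 1 := by
    refine ⟨2 ^ u - 1, ?_⟩
    have h2 : 2 ^ (2 * u) = 2 ^ u * 2 ^ u := by rw [← pow_add]; congr 1; omega
    obtain ⟨B, hB⟩ := Nat.exists_eq_add_of_le h2u1
    have hsimp1 : 1 + B - 1 = B := by omega
    rw [h2, ha, hB, hsimp1]
    have hr : (1 + B) * (1 + B) = (1 + B + 1) * B + 1 := by ring
    omega
  have hd2u : d ∣ 2 ^ (2 * u) - 1 := dvd_trans hda ha_dvd
  have hgcd2um : Nat.gcd (2 * u) m = 2 ^ l := by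
    have h1 : 2 * u = 2 ^ l * (e - 1) := by rw [hu, hl2]; ring
    have hco : Nat.gcd (e - 1) e = 1 := by
      rw [Nat.gcd_rec]
      have h4 : e % (e - 1) = 1 := by
        rw [Nat.mod_eq_sub_mod (by omega : e - 1 ≤ e),
          show e - (e - 1) = 1 from by omega,
          Nat.mod_eq_of_lt (by omega)]
      rw [h4, Nat.gcd_one_left]
    rw [h1, hm, Nat.gcd_mul_left, hco, Nat.mul_one]
  have hstep := dvd_pow_gcd_sub_one d (2 * u) m hd2u hdn
  rw [hgcd2um] at hstep
  obtain ⟨f, hf⟩ : 2 ^ l ∣ u := by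
    obtain ⟨g, hg⟩ := he
    refine ⟨g, ?_⟩
    rw [hu, hg, hl2]
    have : 2 * g + 1 - 1 = 2 * g := by omega
    rw [this]
    ring
  have hdvd_u : 2 ^ (2 ^ l) - 1 ∣ 2 ^ u - 1 := by
    rw [hf, pow_mul]
    simpa using Nat.sub_dvd_pow_sub_pow (2 ^ 2 ^ l) 1 f
  have hdu : d ∣ 2 ^ u - 1 := dvd_trans hstep hdvd_u
  have hd2 : d ∣ 2 := by
    have hsub := Nat.dvd_sub hda hdu
    rw [show a - (2 ^ u - 1) = 2 from by omega] at hsub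
    exact hsub
  have hnodd : ¬ (2 ∣ 2 ^ m - 1) := by
    intro h2div
    have h1 : 2 ∣ 2 ^ m := dvd_pow_self 2 (by omega)
    have h2 : 1 ≤ 2 ^ m := Nat.one_le_two_pow
    omega
  rcases (Nat.dvd_prime Nat.prime_two).1 hd2 with h | h
  · exact h
  · exact absurd (h ▸ hdn) hnodd

lemma bch_bound (m : ℕ) (α : GaloisField 2 m) (hm0 : 0 < m) (hm2 : 2 < m)
    (hα : orderOf α = 2 ^ m - 1) (a i₀ N : ℕ)
    (hgcd : Nat.gcd a (2 ^ m - 1) = 1)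
    (hrun : ∀ k, k ≤ N → (a * (i₀ + k)) % (2 ^ m - 1) ∈ Tset m 0)
    {c : Polynomial (ZMod 2)} (hc : c ∈ cyclicCode m α (↑(Tset m 0) : Set ℕ))
    (hc0 : c ≠ 0) : N + 2 ≤ c.support.card := by
  classical
  have hn7 := n_ge m hm2
  by_contra hcon
  push_neg at hcon
  set w := c.support.card with hw
  have hw1 : 1 ≤ w := Finset.card_pos.2 (Polynomial.support_nonempty.2 hc0)
  have hmem := (mem_cyclicCode_iff m α _ c).1 hc
  have hsupp_lt : ∀ s ∈ c.support, s < 2 ^ m - 1 := by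
    intro s hs
    have h1 : s ≤ c.natDegree := Polynomial.le_natDegree_of_mem_supp s hs
    have h2 : c.natDegree < 2 ^ m - 1 :=
      (Polynomial.natDegree_lt_iff_degree_lt hc0).2 (Polynomial.mem_degreeLT.1 hmem.1)
    omega
  have hcoeff1 : ∀ s ∈ c.support, c.coeff s = 1 := by
    intro s hs
    have h1 : c.coeff s ≠ 0 := Polynomial.mem_support_iff.1 hs
    have h2 : ∀ x : ZMod 2, x ≠ 0 → x = 1 := by decide
    exact h2 _ h1
  have heval : ∀ J : ℕ, (Polynomial.aeval (α ^ J)) c = ∑ s ∈ c.support, (α ^ J) ^ s := by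
    intro J
    rw [Polynomial.aeval_def, Polynomial.eval₂_eq_sum, Polynomial.sum_def]
    apply Finset.sum_congr rfl
    intro s hs
    rw [hcoeff1 s hs, map_one, one_mul]
  set τ : Fin w ≃ {x // x ∈ c.support} := (c.support.equivFin).symm with hτ
  set t : Fin w → ℕ := fun i => (τ i : ℕ) with ht
  have ht_inj : Function.Injective t := by
    intro i1 i2 h12
    apply τ.injective
    exact Subtype.ext h12
  have ht_mem : ∀ i, t i ∈ c.support := fun i => (τ i).2
  set y : Fin w → GaloisField 2 m := fun i => (α ^ a) ^ t i with hy
  have hy_ne : ∀ i, y i ≠ 0 :=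
    fun i => pow_ne_zero _ (pow_ne_zero _ (alpha_ne_zero m α hm2 hα))
  have hy_eq : ∀ i : Fin w, y i = α ^ (a * t i % (2 ^ m - 1)) := by
    intro i
    show (α ^ a) ^ t i = _
    rw [← pow_mul, alpha_pow_mod m α hα]
  have hy_inj : Function.Injective y := by
    intro i1 i2 h12
    apply ht_inj
    rw [hy_eq i1, hy_eq i2] at h12
    have h3 := alpha_pow_inj m α hm2 hα (Nat.mod_lt _ (by omega : 0 < 2 ^ m - 1))
        (Nat.mod_lt _ (by omega : 0 < 2 ^ m - 1)) h12
    have h4 : a * t i1 ≡ a * t i2 [MOD 2 ^ m - 1] := h3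
    have h5 : t i1 ≡ t i2 [MOD 2 ^ m - 1] :=
      Nat.ModEq.cancel_left_of_coprime (by rw [Nat.gcd_comm]; exact hgcd) h4
    have h6 : t i1 % (2 ^ m - 1) = t i2 % (2 ^ m - 1) := h5
    rw [Nat.mod_eq_of_lt (hsupp_lt _ (ht_mem i1)),
      Nat.mod_eq_of_lt (hsupp_lt _ (ht_mem i2))] at h6
    exact h6
  have heqs : ∀ k : Fin w, ∑ i : Fin w, y i ^ (i₀ + (k : ℕ)) = 0 := by
    intro k
    have hkN : (k : ℕ) ≤ N := by
      have := k.isLt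
      omega
    have hj := hrun k hkN
    have h0 : (Polynomial.aeval (α ^ (a * (i₀ + (k : ℕ)) % (2 ^ m - 1)))) c = 0 :=
      hmem.2 _ hj
    rw [heval] at h0
    rw [← h0]
    rw [← Finset.sum_coe_sort c.support
      (fun s => (α ^ (a * (i₀ + (k : ℕ)) % (2 ^ m - 1))) ^ (s : ℕ))]
    rw [← Equiv.sum_comp τ
      (fun s : {x // x ∈ c.support} =>
        (α ^ (a * (i₀ + (k : ℕ)) % (2 ^ m - 1))) ^ (s : ℕ))]
    apply Finset.sum_congr rfl
    intro i _
    show y i ^ (i₀ + (k : ℕ)) = (α ^ (a * (i₀ + (k : ℕ)) % (2 ^ m - 1))) ^ ((τ i : ℕ))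
    rw [alpha_pow_mod m α hα (a * (i₀ + (k : ℕ)))]
    show ((α ^ a) ^ t i) ^ (i₀ + (k : ℕ)) = (α ^ (a * (i₀ + (k : ℕ)))) ^ t i
    rw [← pow_mul, ← pow_mul, ← pow_mul]
    congr 1
    ring
  set M : Matrix (Fin w) (Fin w) (GaloisField 2 m) :=
    Matrix.of (fun k i => y i ^ (i₀ + (k : ℕ))) with hM
  have hMv : M.mulVec (fun _ => 1) = 0 := by
    funext k
    simp only [Matrix.mulVec, dotProduct, hM, Matrix.of_apply, mul_one]
    exact heqs k
  have hdet : M.det ≠ 0 := by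
    have hMT : M.transpose = Matrix.diagonal (fun i => y i ^ i₀) * Matrix.vandermonde y := by
      ext i k
      rw [Matrix.transpose_apply, Matrix.diagonal_mul, Matrix.vandermonde_apply]
      show y i ^ (i₀ + (k : ℕ)) = y i ^ i₀ * y i ^ (k : ℕ)
      rw [pow_add]
    have h2 : M.det = (Matrix.diagonal fun i => y i ^ i₀).det * (Matrix.vandermonde y).det := by
      rw [← Matrix.det_transpose, hMT, Matrix.det_mul]
    rw [h2]
    apply mul_ne_zero
    · rw [Matrix.det_diagonal]
      exact Finset.prod_ne_zero_iff.2 fun i _ => pow_ne_zero _ (hy_ne i)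
    · rw [Matrix.det_vandermonde]
      apply Finset.prod_ne_zero_iff.2
      intro i _
      apply Finset.prod_ne_zero_iff.2
      intro j hj
      have hne : y j ≠ y i := by
        intro hh
        exact (Finset.mem_Ioi.1 hj).ne' (hy_inj hh)
      exact sub_ne_zero.2 hne
  have hzero := Matrix.eq_zero_of_mulVec_eq_zero hdet hMv
  have h1 : (1 : GaloisField 2 m) = 0 := congrFun hzero ⟨0, by omega⟩
  exact one_ne_zero h1

theorem stmt10 (m l e : ℕ) (hl : 1 ≤ l) (he : Odd e) (he3 : 3 ≤ e)
    (hm : m = 2 ^ l * e) (hm2 : 2 < m)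
    (α : GaloisField 2 m) (hα : orderOf α = 2 ^ m - 1) :
    Module.finrank (ZMod 2) ↥(cyclicCode m α (↑(Tset m 0) : Set ℕ)) = 2 ^ (m - 1) ∧
    minDistGE (cyclicCode m α (↑(Tset m 0) : Set ℕ)) (2 ^ ((m - 2 ^ l + 2) / 2) + 2) ∧
    (l = 1 → minDistGE (cyclicCode m α (↑(Tset m 0) : Set ℕ)) (2 ^ (m / 2) + 2)) := by
  have hm0 : 0 < m := by omega
  have hl2 : 2 ^ l = 2 * 2 ^ (l - 1) := by rw [← pow_succ']; congr 1; omega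
  have hl1pos : (1:ℕ) ≤ 2 ^ (l - 1) := Nat.one_le_two_pow
  have h2l2 : (2:ℕ) ≤ 2 ^ l := by
    calc (2:ℕ) = 2 ^ 1 := by norm_num
    _ ≤ 2 ^ l := Nat.pow_le_pow_right (by norm_num) hl
  have hme : m % 2 = 0 := by
    have h1 : m = 2 * (2 ^ (l - 1) * e) := by rw [hm, hl2]; ring
    omega
  set u := 2 ^ (l - 1) * (e - 1) with hu
  have hu_pos : 0 < u := by
    have : 1 * 2 ≤ 2 ^ (l - 1) * (e - 1) := Nat.mul_le_mul hl1pos (by omega)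
    omega
  have hml : 2 ^ l ≤ m := by
    rw [hm]
    exact Nat.le_mul_of_pos_right _ (by omega)
  have h2u : 2 * u = m - 2 ^ l := by
    have h1 : 2 * u = 2 ^ l * (e - 1) := by rw [hu, hl2]; ring
    have h2 : 2 ^ l * e = 2 ^ l * (e - 1) + 2 ^ l := by
      conv_lhs => rw [show e = (e - 1) + 1 from by omega]
      rw [Nat.mul_add, Nat.mul_one]
    omega
  have h2um : 2 * u + 2 ≤ m := by omega
  have hexp : (m - 2 ^ l + 2) / 2 = u + 1 := by omega
  have hgcd : Nat.gcd (2 ^ u + 1) (2 ^ m - 1) = 1 := by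
    have h := gcd_a_n l e hl he he3
    rw [← hu, ← hm] at h
    exact h
  have hn0 : 0 < 2 ^ m - 1 := by have := n_ge m hm2; omega
  have hdist : minDistGE (cyclicCode m α (↑(Tset m 0) : Set ℕ)) (2 ^ (u + 1) + 2) := by
    intro c hc hc0
    have hrun : ∀ k, k ≤ 2 ^ (u + 1) →
        ((2 ^ u + 1) * ((2 ^ m - 1 - 2 ^ u) + k)) % (2 ^ m - 1) ∈ Tset m 0 := by
      intro k hk
      rw [Tset_eq m hm0 hme]
      rw [Finset.mem_filter, Finset.mem_range]
      exact ⟨Nat.mod_lt _ hn0, run_even m u k hm2 hme hu_pos h2um hk⟩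
    exact bch_bound m α hm0 hm2 hα (2 ^ u + 1) (2 ^ m - 1 - 2 ^ u) (2 ^ (u + 1))
      hgcd hrun hc hc0
  refine ⟨code_finrank m α hm0 hm2 hme hα, ?_, ?_⟩
  · rw [hexp]
    exact hdist
  · intro hl1
    have h21 : (2:ℕ) ^ l = 2 := by rw [hl1]; norm_num
    have hmu : m / 2 = u + 1 := by omega
    rw [hmu]
    exact hdist
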